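/- Let P, Q : ℝ² → ℝ be continuous, and let γ₁, …, γₙ : ℝ → ℝ² be differentiable periodic solutions of the system x' = P(x,y), y' = Q(x,y) (each γᵢ satisfies γᵢ'(t) = (P(γᵢ(t)), Q(γᵢ(t))) and has some period Tᵢ > 0). Let f : ℝ² → ℝ be a function that separates the orbits: f(u) ≠ f(v) whenever u lies on the orbit of γᵢ, v lies on the orbit of γⱼ, and i ≠ j. Suppose λ₀, …, λ_{n−1} ∈ ℝ and g : ℝ² → ℝ is a differentiable function such that P(z)·∂g/∂x(z) + Q(z)·∂g/∂y(z) = Σ_{k=0}^{n−1} λₖ·f(z)^k for all z ∈ ℝ². Then λ₀ = λ₁ = ⋯ = λ_{n−1} = 0. -/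
import Mathlib


open Finset

/-- If `γ₁, …, γₙ` are periodic solutions of `x' = P(x,y)`, `y' = Q(x,y)`, `f` separates
their orbits, and `D(g) = P·g_x + Q·g_y` equals `Σ λₖ fᵏ` for a differentiable `g`,
then all the `λₖ` vanish. -/
theorem coefficients_vanish_of_directional_derivative_eq_poly_of_separating
    (n : ℕ) (P Q : ℝ × ℝ → ℝ) (hP : Continuous P) (hQ : Continuous Q)
    (γ : Fin n → ℝ → ℝ × ℝ)
    (hsol : ∀ i, ∀ t : ℝ, HasDerivAt (γ i) (P (γ i t), Q (γ i t)) t)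
    (T : Fin n → ℝ) (hT : ∀ i, 0 < T i)
    (hper : ∀ i, ∀ t : ℝ, γ i (t + T i) = γ i t)
    (f : ℝ × ℝ → ℝ)
    (hsep : ∀ i j, i ≠ j → ∀ s t : ℝ, f (γ i s) ≠ f (γ j t))
    (lam : Fin n → ℝ) (g : ℝ × ℝ → ℝ) (hg : Differentiable ℝ g)
    (heq : ∀ z : ℝ × ℝ,
      P z * fderiv ℝ g z (1, 0) + Q z * fderiv ℝ g z (0, 1) =
        ∑ k : Fin n, lam k * f z ^ (k : ℕ)) :
    ∀ k : Fin n, lam k = 0 := by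
  -- derivative of g ∘ γ i
  have hderiv : ∀ i t, HasDerivAt (fun s => g (γ i s))
      (∑ k : Fin n, lam k * f (γ i t) ^ (k : ℕ)) t := by
    intro i t
    have h1 : HasDerivAt (fun s => g (γ i s))
        (fderiv ℝ g (γ i t) (P (γ i t), Q (γ i t))) t :=
      (hg (γ i t)).hasFDerivAt.comp_hasDerivAt t (hsol i t)
    have h2 : fderiv ℝ g (γ i t) (P (γ i t), Q (γ i t)) =
        ∑ k : Fin n, lam k * f (γ i t) ^ (k : ℕ) := by
      rw [← heq (γ i t)]
      have : (P (γ i t), Q (γ i t)) =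
          P (γ i t) • ((1:ℝ), (0:ℝ)) + Q (γ i t) • ((0:ℝ), (1:ℝ)) := by
        simp [Prod.ext_iff]
      rw [this, map_add, map_smul, map_smul, smul_eq_mul, smul_eq_mul]
    rwa [h2] at h1
  -- for each i, find a zero of the derivative
  have key : ∀ i : Fin n, ∃ t : ℝ, ∑ k : Fin n, lam k * f (γ i t) ^ (k : ℕ) = 0 := by
    intro i
    have hcont : ContinuousOn (fun s => g (γ i s)) (Set.Icc 0 (T i)) :=
      fun t _ => ((hderiv i t).continuousAt).continuousWithinAt
    have hend : g (γ i 0) = g (γ i (T i)) := by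
      have := hper i 0; rw [zero_add] at this; rw [this]
    obtain ⟨c, _, hc⟩ := exists_hasDerivAt_eq_zero (hT i) hcont hend
      (fun t _ => hderiv i t)
    exact ⟨c, hc⟩
  choose τ hτ using key
  -- the values f (γ i (τ i)) are pairwise distinct roots of the polynomial
  set p : Polynomial ℝ := ∑ k : Fin n, Polynomial.C (lam k) * Polynomial.X ^ (k : ℕ) with hp
  have hinj : Function.Injective (fun i : Fin n => f (γ i (τ i))) := by
    intro i j hij
    by_contra h
    exact hsep i j h (τ i) (τ j) hij
  have hevals : ∀ i : Fin n, p.eval (f (γ i (τ i))) = 0 := by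
    intro i
    simpa [hp, Polynomial.eval_finset_sum] using hτ i
  intro k
  have hn : 0 < n := k.pos
  have hdeg : p.natDegree < n := by
    refine lt_of_le_of_lt (Polynomial.natDegree_sum_le_of_forall_le _ _
      (fun i _ => ?_) : p.natDegree ≤ n - 1) (by omega)
    refine le_trans (Polynomial.natDegree_C_mul_le _ _) ?_
    rw [Polynomial.natDegree_X_pow]
    omega
  have hp0 : p = 0 :=
    Polynomial.eq_zero_of_natDegree_lt_card_of_eval_eq_zero p hinj hevals
      (by simpa using hdeg)
  have hcoeff := Polynomial.ext_iff.mp hp0 (k : ℕ)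
  rw [hp] at hcoeff
  simp only [Polynomial.finset_sum_coeff, Polynomial.coeff_C_mul, Polynomial.coeff_X_pow,
    Polynomial.coeff_zero] at hcoeff
  rw [Finset.sum_eq_single k] at hcoeff
  · simpa using hcoeff
  · intro b _ hbk
    rw [if_neg fun h => hbk (Fin.val_injective h).symm, mul_zero]
  · simp
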